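/- Let N, M, K be positive natural numbers, let c > 0 and β > 0 be real numbers, let V ∈ ℂ^{N×M} satisfy V^H V = c·I_M, and let B ∈ ℂ^{N×K} with T := V^H B ≠ 0. Then ‖B − √β · V T / ‖T‖_F ‖_F² = ‖B‖_F² − 2√β · ‖T‖_F + β·c. -/

import Mathlib

open Matrix
open scoped BigOperators

/-- The expansion (52) of the paper: substituting the closed-form digital precoder back
into the objective gives ‖B − √β·V T/‖T‖_F‖_F² = ‖B‖_F² − 2√β‖T‖_F + βc,
where T = VᴴB and VᴴV = c·I. -/
private lemma entry_sq (z : ℂ) : ((‖z‖^2 : ℝ) : ℂ) = (starRingEnd ℂ) z * z := by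
  rw [Complex.sq_norm]
  exact_mod_cast Complex.normSq_eq_conj_mul_self

private lemma trace_self (n m : ℕ) (X : Matrix (Fin n) (Fin m) ℂ) :
    trace (Xᴴ * X) = ((∑ i, ∑ k, ‖X i k‖^2 : ℝ) : ℂ) := by
  simp only [Matrix.trace, Matrix.diag_apply, Matrix.mul_apply, Matrix.conjTranspose_apply]
  push_cast
  rw [Finset.sum_comm]
  refine Finset.sum_congr rfl fun i _ => Finset.sum_congr rfl fun k _ => ?_
  have := entry_sq (X i k)
  push_cast at this
  exact this.symm

theorem stmt13 (N M K : ℕ) (hN : 0 < N) (hM : 0 < M) (hK : 0 < K)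
    (c : ℝ) (hc : 0 < c) (β : ℝ) (hβ : 0 < β)
    (V : Matrix (Fin N) (Fin M) ℂ)
    (hV : Vᴴ * V = ((c : ℝ) : ℂ) • (1 : Matrix (Fin M) (Fin M) ℂ))
    (B : Matrix (Fin N) (Fin K) ℂ)
    (T : Matrix (Fin M) (Fin K) ℂ) (hT : T = Vᴴ * B) (hTne : T ≠ 0) :
    (∑ i, ∑ k,
        ‖(B - ((Real.sqrt β / Real.sqrt (∑ j, ∑ k, ‖T j k‖ ^ 2) : ℝ) : ℂ) • (V * T)) i k‖ ^ 2)
      = (∑ i, ∑ k, ‖B i k‖ ^ 2)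
        - 2 * Real.sqrt β * Real.sqrt (∑ j, ∑ k, ‖T j k‖ ^ 2) + β * c := by
  set t : ℝ := ∑ j, ∑ k, ‖T j k‖ ^ 2 with ht'
  have htpos : 0 < t := by
    obtain ⟨j, k, hjk⟩ : ∃ j k, T j k ≠ 0 := by
      by_contra h; push_neg at h
      exact hTne (by ext j k; simpa using h j k)
    have h1 : (0:ℝ) < ‖T j k‖ ^ 2 := pow_pos (norm_pos_iff.mpr hjk) 2
    have h2 : ‖T j k‖ ^ 2 ≤ ∑ k', ‖T j k'‖ ^ 2 :=
      Finset.single_le_sum (f := fun k' => ‖T j k'‖ ^ 2)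
        (fun _ _ => by positivity) (Finset.mem_univ k)
    have h3 : (∑ k', ‖T j k'‖ ^ 2) ≤ t :=
      Finset.single_le_sum (f := fun j => ∑ k', ‖T j k'‖ ^ 2)
        (fun _ _ => Finset.sum_nonneg fun _ _ => by positivity) (Finset.mem_univ j)
    linarith
  set s : ℝ := Real.sqrt β / Real.sqrt t with hs'
  set X : Matrix (Fin N) (Fin K) ℂ := V * T with hX'
  set A : Matrix (Fin N) (Fin K) ℂ := B - ((s:ℝ):ℂ) • X with hA'
  have hXX : Xᴴ * X = ((c:ℝ):ℂ) • (Tᴴ * T) := by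
    rw [hX', conjTranspose_mul, Matrix.mul_assoc Tᴴ Vᴴ (V * T),
      ← Matrix.mul_assoc Vᴴ V T, hV, Matrix.smul_mul, Matrix.one_mul, Matrix.mul_smul]
  have hXB : Xᴴ * B = Tᴴ * T := by
    rw [hX', conjTranspose_mul, Matrix.mul_assoc, ← hT]
  have hBX : Bᴴ * X = Tᴴ * T := by
    rw [hX', ← Matrix.mul_assoc, show Bᴴ * V = Tᴴ by
      rw [hT, conjTranspose_mul, conjTranspose_conjTranspose]]
  have hTt : trace (Tᴴ * T) = ((t:ℝ):ℂ) := trace_self M K T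
  have hAA : Aᴴ * A = Bᴴ * B - (((2*s - s^2*c : ℝ)):ℂ) • (Tᴴ * T) := by
    rw [hA', conjTranspose_sub, conjTranspose_smul, Matrix.sub_mul, Matrix.mul_sub,
      Matrix.mul_sub, Matrix.smul_mul, Matrix.smul_mul, Matrix.mul_smul, Matrix.mul_smul,
      hXX, hXB, hBX]
    simp only [Complex.star_def, Complex.conj_ofReal, smul_smul]
    push_cast
    module
  have key : ((∑ i, ∑ k, ‖A i k‖ ^ 2 : ℝ) : ℂ) =
      ((∑ i, ∑ k, ‖B i k‖ ^ 2 : ℝ) : ℂ) - (((2*s - s^2*c : ℝ)):ℂ) * ((t:ℝ):ℂ) := by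
    rw [← trace_self, hAA, trace_sub, trace_smul, trace_self, hTt, smul_eq_mul]
  have keyR : (∑ i, ∑ k, ‖A i k‖ ^ 2) =
      (∑ i, ∑ k, ‖B i k‖ ^ 2) - (2*s - s^2*c) * t := by
    exact_mod_cast key
  rw [keyR]
  have hst : Real.sqrt t * Real.sqrt t = t := Real.mul_self_sqrt htpos.le
  have htne : Real.sqrt t ≠ 0 := by positivity
  have h1 : s * t = Real.sqrt β * Real.sqrt t := by
    rw [hs', div_mul_eq_mul_div, div_eq_iff htne, mul_assoc, hst]
  have h2 : s ^ 2 * t = β := by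
    rw [hs', div_pow, Real.sq_sqrt hβ.le, Real.sq_sqrt htpos.le]
    field_simp
  linear_combination (-2) * h1 + c * h2
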